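/- Let n ≥ 1, let P be a real symmetric positive definite n×n matrix, A a real n×n matrix, and B a nonzero real n×1 matrix (so the 1×1 matrix BᵀPB is positive, hence invertible). Let k, α, λ ∈ ℝ and set K = −k·(BᵀPB)⁻¹·BᵀPA ∈ ℝ^{1×n}. Then (α·A + λ·B·K)ᵀ·P·(α·A + λ·B·K) = α²·AᵀPA + (λ²k² − 2αλk)·AᵀPB(BᵀPB)⁻¹BᵀPA. -/

import Mathlib

open Matrix

theorem stmt_7 (n : ℕ) (hn : 1 ≤ n)
    (P : Matrix (Fin n) (Fin n) ℝ) (hPsymm : P.IsSymm) (hPpd : P.PosDef)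
    (A : Matrix (Fin n) (Fin n) ℝ) (B : Matrix (Fin n) (Fin 1) ℝ) (hB : B ≠ 0)
    (k α lam : ℝ) (K : Matrix (Fin 1) (Fin n) ℝ)
    (hK : K = (-k) • ((Bᵀ * P * B)⁻¹ * (Bᵀ * P * A))) :
    (α • A + lam • (B * K))ᵀ * P * (α • A + lam • (B * K)) =
      α ^ 2 • (Aᵀ * P * A) +
        (lam ^ 2 * k ^ 2 - 2 * α * lam * k) •
          (Aᵀ * P * B * (Bᵀ * P * B)⁻¹ * (Bᵀ * P * A)) := by
  have hPt : Pᵀ = P := hPsymm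
  set S := Bᵀ * P * B with hS
  -- the column of B as a vector
  set b : Fin n → ℝ := fun i => B i 0 with hb
  have hbne : b ≠ 0 := by
    intro h
    apply hB
    ext i j
    have : b i = 0 := by rw [h]; rfl
    simpa [hb, Subsingleton.elim j 0] using this
  have hSentry : S 0 0 = b ⬝ᵥ P.mulVec b := by
    simp [hS, Matrix.mul_apply, Matrix.mulVec, dotProduct, Finset.mul_sum, hb,
      Finset.sum_mul]
    rw [Finset.sum_comm]
    congr 1; ext i; congr 1; ext j; ring
  have hSpos : 0 < S 0 0 := by
    have := hPpd.dotProduct_mulVec_pos hbne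
    simpa [hSentry] using this
  have hdet : IsUnit S.det := by
    rw [Matrix.det_fin_one]
    exact (isUnit_iff_ne_zero).2 (ne_of_gt hSpos)
  have hMS : S⁻¹ * S = 1 := Matrix.nonsing_inv_mul S hdet
  have hSt : Sᵀ = S := by
    rw [hS, Matrix.transpose_mul, Matrix.transpose_mul, Matrix.transpose_transpose, hPt,
      Matrix.mul_assoc]
  have hMT : (S⁻¹)ᵀ = S⁻¹ := by
    rw [Matrix.transpose_nonsing_inv, hSt]
  -- reduction lemma
  have hred : ∀ X : Matrix (Fin 1) (Fin n) ℝ,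
      S⁻¹ * (Bᵀ * (P * (B * (S⁻¹ * X)))) = S⁻¹ * X := by
    intro X
    calc S⁻¹ * (Bᵀ * (P * (B * (S⁻¹ * X)))) = (S⁻¹ * S) * (S⁻¹ * X) := by
          simp only [hS, Matrix.mul_assoc]
      _ = S⁻¹ * X := by rw [hMS, Matrix.one_mul]
  subst hK
  simp only [Matrix.transpose_add, Matrix.transpose_smul, Matrix.transpose_mul,
    Matrix.mul_smul, Matrix.smul_mul, Matrix.add_mul, Matrix.mul_add, hMT, hPt,
    Matrix.transpose_transpose, Matrix.mul_assoc, hred]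
  match_scalars <;> ring
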